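/- Suppose for all t ≥ 0, E[Ψ_{t+1} − Ψ_t − V·u_t | F_t] ≤ B − V·u* + V·B₂·E[α_t | F_t], where Ψ_t ≥ 0, Ψ_0 = 0, u_t ∈ [0, Ū] a.s., α_t ∈ {0,1}, and limsup_{T→∞} E[(1/T) Σ_{t=0}^{T-1} α_t] ≤ 1/L. Then liminf_{T→∞} (1/T) Σ_{t=0}^{T-1} E[u_t] ≥ u* − B/V − B₂/L. -/

import Mathlib

open MeasureTheory Filter

/-- Modified Lyapunov drift-plus-penalty bound: if the conditional drift
satisfies `E[Ψ_{t+1} − Ψ_t − V·u_t | F_t] ≤ B − V·u* + V·B₂·E[α_t | F_t]`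
with `Ψ ≥ 0`, `Ψ_0 = 0`, `u_t ∈ [0, Ū]`, `α_t ∈ {0,1}`, and the ACK fraction
satisfies `limsup E[(1/T) Σ α_t] ≤ 1/L`, then
`liminf (1/T) Σ E[u_t] ≥ u* − B/V − B₂/L`. -/
theorem stmt_19 {Ω : Type*} {m0 : MeasurableSpace Ω} (μ : Measure Ω)
    [IsProbabilityMeasure μ]
    (ℱ : ℕ → MeasurableSpace Ω) (hℱ : ∀ t, ℱ t ≤ m0)
    (Ψ u α : ℕ → Ω → ℝ)
    (V B B₂ ustar Ubar L : ℝ)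
    (hV : 0 < V) (hB : 0 < B) (hB₂ : 0 < B₂) (hL : 1 ≤ L) (hUbar : 0 ≤ Ubar)
    (hΨint : ∀ t, Integrable (Ψ t) μ)
    (huint : ∀ t, Integrable (u t) μ)
    (hαint : ∀ t, Integrable (α t) μ)
    (hΨnonneg : ∀ t ω, 0 ≤ Ψ t ω)
    (hΨ0 : ∀ ω, Ψ 0 ω = 0)
    (hu : ∀ t, ∀ᵐ ω ∂μ, u t ω ∈ Set.Icc 0 Ubar)
    (hα01 : ∀ t ω, α t ω = 0 ∨ α t ω = 1)
    (hdrift : ∀ t, ∀ᵐ ω ∂μ,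
      (μ[fun ω' => Ψ (t + 1) ω' - Ψ t ω' - V * u t ω' | ℱ t]) ω
        ≤ B - V * ustar + V * B₂ * (μ[α t | ℱ t]) ω)
    (hack : Filter.limsup
        (fun T : ℕ => ∫ ω, (∑ t ∈ Finset.range T, α t ω) / T ∂μ)
        Filter.atTop ≤ 1 / L) :
    ustar - B / V - B₂ / L ≤
      Filter.liminf (fun T : ℕ => (∑ t ∈ Finset.range T, ∫ ω, u t ω ∂μ) / T)
        Filter.atTop := by
  -- Step 1: integrate the drift inequality.
  have key : ∀ t, (∫ ω, Ψ (t+1) ω ∂μ) - (∫ ω, Ψ t ω ∂μ) - V * ∫ ω, u t ω ∂μ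
      ≤ B - V * ustar + V * B₂ * ∫ ω, α t ω ∂μ := by
    intro t
    have hint : Integrable (fun ω' => Ψ (t + 1) ω' - Ψ t ω' - V * u t ω') μ :=
      ((hΨint (t+1)).sub (hΨint t)).sub ((huint t).const_mul V)
    have hmono := integral_mono_ae (integrable_condExp)
      ((integrable_const (B - V * ustar)).add (integrable_condExp.const_mul (V * B₂)))
      (hdrift t)
    rw [integral_condExp (hℱ t)] at hmono
    simp only [Pi.add_apply] at hmono
    rw [integral_add (integrable_const _) (integrable_condExp.const_mul _),
      integral_const, integral_const_mul _ _, integral_condExp (hℱ t)] at hmono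
    have hsub1 : Integrable (fun ω => Ψ (t+1) ω - Ψ t ω) μ := (hΨint (t+1)).sub (hΨint t)
    have hmul : Integrable (fun ω => V * u t ω) μ := (huint t).const_mul V
    rw [integral_sub hsub1 hmul, integral_sub (hΨint (t+1)) (hΨint t),
      integral_const_mul] at hmono
    simpa using hmono
  -- Step 2: telescope.
  have tele : ∀ T : ℕ, (∫ ω, Ψ T ω ∂μ) - V * ∑ t ∈ Finset.range T, ∫ ω, u t ω ∂μ
      ≤ (T : ℝ) * (B - V * ustar) + V * B₂ * ∑ t ∈ Finset.range T, ∫ ω, α t ω ∂μ := by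
    intro T
    induction T with
    | zero => simp [hΨ0]
    | succ T ih =>
      rw [Finset.sum_range_succ, Finset.sum_range_succ]
      push_cast
      have h1 := key T
      nlinarith [h1, ih]
  -- Bounds on the integrals of α and u.
  have hα0 : ∀ t, 0 ≤ ∫ ω, α t ω ∂μ := fun t =>
    integral_nonneg fun ω => by rcases hα01 t ω with h | h <;> simp [h]
  have hα1 : ∀ t, (∫ ω, α t ω ∂μ) ≤ 1 := by
    intro t
    have := integral_mono (hαint t) (integrable_const 1)
      (fun ω => by rcases hα01 t ω with h | h <;> simp [h])
    simpa using this
  have hu0 : ∀ t, 0 ≤ ∫ ω, u t ω ∂μ := fun t =>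
    integral_nonneg_of_ae ((hu t).mono fun ω hω => hω.1)
  -- abbreviations
  set Sα : ℕ → ℝ := fun T => ∑ t ∈ Finset.range T, ∫ ω, α t ω ∂μ with hSα
  set Su : ℕ → ℝ := fun T => ∑ t ∈ Finset.range T, ∫ ω, u t ω ∂μ with hSu
  have haeq : (fun T : ℕ => ∫ ω, (∑ t ∈ Finset.range T, α t ω) / T ∂μ)
      = fun T : ℕ => Sα T / T := by
    funext T
    rw [integral_div, integral_finset_sum _ fun t _ => hαint t]
  rw [haeq] at hack
  -- Step 3: per-T inequality, T ≥ 1.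
  have step3 : ∀ T : ℕ, 1 ≤ T → ustar - B / V - B₂ * (Sα T / T) ≤ Su T / T := by
    intro T hT
    have hTpos : (0 : ℝ) < T := by exact_mod_cast hT
    have hΨpos : 0 ≤ ∫ ω, Ψ T ω ∂μ := integral_nonneg fun ω => hΨnonneg T ω
    have h := tele T
    have key2 : ustar * T - (B / V) * T - B₂ * Sα T ≤ Su T := by
      have hVB : V * ((B / V) * T) = B * T := by field_simp
      have h1 : V * (ustar * T - (B / V) * T - B₂ * Sα T) ≤ V * Su T := by
        have hexp : V * (ustar * T - (B / V) * T - B₂ * Sα T)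
            = V * ustar * T - B * T - V * B₂ * Sα T := by
          rw [mul_sub, mul_sub, hVB]; ring
        rw [hexp]
        nlinarith [h, hΨpos]
      exact (mul_le_mul_iff_of_pos_left hV).mp h1
    rw [le_div_iff₀ hTpos]
    have hB2T : B₂ * (Sα T / T) * T = B₂ * Sα T := by field_simp
    nlinarith [key2, hB2T]
  -- Bounds for sequences
  have hSα_le : ∀ T : ℕ, Sα T / T ≤ 1 := by
    intro T
    rcases Nat.eq_zero_or_pos T with h | h
    · simp [h, hSα]
    · have hTpos : (0 : ℝ) < T := by exact_mod_cast h
      rw [div_le_one hTpos]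
      calc Sα T ≤ ∑ t ∈ Finset.range T, (1 : ℝ) :=
            Finset.sum_le_sum fun t _ => hα1 t
        _ = T := by simp
  have hSu_le : ∀ T : ℕ, Su T / T ≤ Ubar := by
    intro T
    rcases Nat.eq_zero_or_pos T with h | h
    · simp [h, hSu, hUbar]
    · have hTpos : (0 : ℝ) < T := by exact_mod_cast h
      rw [div_le_iff₀ hTpos]
      calc Su T ≤ ∑ t ∈ Finset.range T, Ubar :=
            Finset.sum_le_sum fun t _ => by
              have := integral_mono_ae (huint t) (integrable_const Ubar)
                ((hu t).mono fun ω hω => hω.2)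
              simpa using this
        _ = Ubar * T := by simp [mul_comm]
  -- Limit argument
  have main : ∀ ε : ℝ, 0 < ε →
      ustar - B / V - B₂ / L ≤
        (Filter.liminf (fun T : ℕ => Su T / T) Filter.atTop) + ε := by
    intro ε hε
    set δ := ε / B₂ with hδ
    have hδpos : 0 < δ := div_pos hε hB₂
    have hbdd : IsBoundedUnder (· ≤ ·) atTop fun T : ℕ => Sα T / T :=
      isBoundedUnder_of ⟨1, hSα_le⟩
    have hev : ∀ᶠ T : ℕ in atTop, Sα T / T < 1 / L + δ :=
      eventually_lt_of_limsup_lt (lt_of_le_of_lt hack (by linarith)) hbdd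
    have hev2 : ∀ᶠ T : ℕ in atTop, ustar - B / V - B₂ / L - ε ≤ Su T / T := by
      filter_upwards [hev, eventually_ge_atTop 1] with T hT1 hT2
      have h3 := step3 T hT2
      have : B₂ * (Sα T / T) ≤ B₂ * (1 / L + δ) := by
        apply mul_le_mul_of_nonneg_left (le_of_lt hT1) hB₂.le
      have hBδ : B₂ * δ = ε := by
        rw [hδ]; field_simp
      have hBL : B₂ * (1 / L) = B₂ / L := by ring
      nlinarith [h3]
    have hcb : IsCoboundedUnder (· ≥ ·) atTop fun T : ℕ => Su T / T :=
      IsBoundedUnder.isCoboundedUnder_ge (isBoundedUnder_of ⟨Ubar, hSu_le⟩)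
    have := le_liminf_of_le hcb hev2
    linarith
  exact le_of_forall_pos_le_add main
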